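/- Let A be an m×n complex matrix and B an m×p complex matrix, and let G be an n×m matrix with A·G·A = A and H a p×m matrix with B·H·B = B. Then rank(rowBlock(A, B) − rowBlock(A, B)·colBlock(G, H)·rowBlock(A, B)) = rank(A·G·B) + rank(B·H·A) + rank(rowBlock(A, B)) − rank(A) − rank(B). -/

import Mathlib

open Matrix

lemma range_fromColumns {m n p : ℕ} (X : Matrix (Fin m) (Fin n) ℂ)
    (Y : Matrix (Fin m) (Fin p) ℂ) :
    LinearMap.range (Matrix.fromCols X Y).mulVecLin =
      LinearMap.range X.mulVecLin ⊔ LinearMap.range Y.mulVecLin := by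
  apply le_antisymm
  · rintro v ⟨u, rfl⟩
    rw [Submodule.mem_sup]
    refine ⟨X *ᵥ (u ∘ Sum.inl), ⟨_, rfl⟩, Y *ᵥ (u ∘ Sum.inr), ⟨_, rfl⟩, ?_⟩
    rw [Matrix.mulVecLin_apply, ← Matrix.fromCols_mulVec_sumElim,
      Sum.elim_comp_inl_inr]
  · rw [sup_le_iff]
    constructor
    · rintro v ⟨u, rfl⟩
      exact ⟨Sum.elim u 0, by simp [Matrix.mulVecLin_apply]⟩
    · rintro v ⟨u, rfl⟩
      exact ⟨Sum.elim 0 u, by simp [Matrix.mulVecLin_apply]⟩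

lemma rank_fromColumns_add {m n p : ℕ} (X : Matrix (Fin m) (Fin n) ℂ)
    (Y : Matrix (Fin m) (Fin p) ℂ) :
    (Matrix.fromCols X Y).rank
      + Module.finrank ℂ (LinearMap.range X.mulVecLin ⊓ LinearMap.range Y.mulVecLin :
          Submodule ℂ (Fin m → ℂ)) = X.rank + Y.rank := by
  rw [Matrix.rank, Matrix.rank, Matrix.rank, range_fromColumns]
  exact Submodule.finrank_sup_add_finrank_inf_eq _ _

lemma rank_neg' {m n : Type*} [Fintype m] [Fintype n] (M : Matrix m n ℂ) :
    (-M).rank = M.rank := by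
  have : LinearMap.range (-M).mulVecLin = LinearMap.range M.mulVecLin := by
    apply le_antisymm
    · rintro v ⟨u, rfl⟩
      refine ⟨-u, ?_⟩
      rw [Matrix.mulVecLin_apply, Matrix.mulVecLin_apply, Matrix.mulVec_neg,
        Matrix.neg_mulVec]
    · rintro v ⟨u, rfl⟩
      refine ⟨-u, ?_⟩
      rw [Matrix.mulVecLin_apply, Matrix.mulVecLin_apply, Matrix.mulVec_neg,
        Matrix.neg_mulVec, neg_neg]
  rw [Matrix.rank, Matrix.rank, this]

/-- For `A : m × n`, `B : m × p` with `{1}`-inverses `G`, `H`: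
`rank ([A, B] - [A, B] * [G; H] * [A, B])
  = rank (A*G*B) + rank (B*H*A) + rank [A, B] - rank A - rank B`. -/
theorem stmt_9 (m n p : ℕ) (A : Matrix (Fin m) (Fin n) ℂ) (B : Matrix (Fin m) (Fin p) ℂ)
    (G : Matrix (Fin n) (Fin m) ℂ) (H : Matrix (Fin p) (Fin m) ℂ)
    (hG : A * G * A = A) (hH : B * H * B = B) :
    ((Matrix.fromCols A B
        - Matrix.fromCols A B * Matrix.fromRows G H * Matrix.fromCols A B).rank : ℤ) =
      ((A * G * B).rank : ℤ) + ((B * H * A).rank : ℤ)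
        + ((Matrix.fromCols A B).rank : ℤ) - (A.rank : ℤ) - (B.rank : ℤ) := by
  -- Step 1: the LHS matrix is -[B*H*A, A*G*B]
  have hmat : Matrix.fromCols A B
        - Matrix.fromCols A B * Matrix.fromRows G H * Matrix.fromCols A B
      = -(Matrix.fromCols (B*H*A) (A*G*B)) := by
    rw [Matrix.fromCols_mul_fromRows, Matrix.mul_fromCols]
    have h1 : (A * G + B * H) * A = A + B * H * A := by
      rw [Matrix.add_mul, hG]
    have h2 : (A * G + B * H) * B = A * G * B + B := by
      rw [Matrix.add_mul, hH]
    rw [Matrix.fromCols_neg, h1, h2]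
    ext i (j | j) <;> simp [Matrix.fromCols]
  rw [hmat, rank_neg']
  -- Step 2: the intersections of the column spaces agree
  have hkey : (LinearMap.range (B*H*A).mulVecLin ⊓ LinearMap.range (A*G*B).mulVecLin :
        Submodule ℂ (Fin m → ℂ))
      = LinearMap.range A.mulVecLin ⊓ LinearMap.range B.mulVecLin := by
    apply le_antisymm
    · apply le_inf
      · refine inf_le_right.trans ?_
        rintro v ⟨u, rfl⟩
        refine ⟨(G*B) *ᵥ u, ?_⟩
        simp [Matrix.mulVecLin_apply, Matrix.mulVec_mulVec, Matrix.mul_assoc]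
      · refine inf_le_left.trans ?_
        rintro v ⟨u, rfl⟩
        refine ⟨(H*A) *ᵥ u, ?_⟩
        simp [Matrix.mulVecLin_apply, Matrix.mulVec_mulVec, Matrix.mul_assoc]
    · rintro v ⟨⟨x, hx⟩, ⟨y, hy⟩⟩
      rw [Matrix.mulVecLin_apply] at hx hy
      constructor
      · refine ⟨x, ?_⟩
        rw [Matrix.mulVecLin_apply]
        calc (B*H*A) *ᵥ x = (B*H) *ᵥ (A *ᵥ x) := by rw [Matrix.mulVec_mulVec]
          _ = (B*H) *ᵥ (B *ᵥ y) := by rw [hx, hy]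
          _ = (B*H*B) *ᵥ y := by rw [Matrix.mulVec_mulVec]
          _ = v := by rw [hH, hy]
      · refine ⟨y, ?_⟩
        rw [Matrix.mulVecLin_apply]
        calc (A*G*B) *ᵥ y = (A*G) *ᵥ (B *ᵥ y) := by rw [Matrix.mulVec_mulVec]
          _ = (A*G) *ᵥ (A *ᵥ x) := by rw [hx, hy]
          _ = (A*G*A) *ᵥ x := by rw [Matrix.mulVec_mulVec]
          _ = v := by rw [hG, hx]
  have e1 := rank_fromColumns_add A B
  have e2 := rank_fromColumns_add (B*H*A) (A*G*B)
  rw [hkey] at e2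
  omega
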